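/- Let R be a domain and I ⊂ R a non-zero ideal. Then (a) C(I) ≠ 0, and (b) for every non-zero element r ∈ C(I), the colon ideal L :_T r equals J. -/

import Mathlib

noncomputable section

universe u v

/-- The `R`-algebra map `φ : T = R[y_i : i ∈ ι] → R[t]` sending `y_i ↦ f i · t`. -/
def reesHom {R : Type u} [CommRing R] {ι : Type v} (f : ι → R) :
    MvPolynomial ι R →ₐ[R] Polynomial R :=
  MvPolynomial.aeval fun i => Polynomial.C (f i) * Polynomial.X

/-- `J`, the defining ideal of the Rees algebra of the ideal generated by `f`. -/
def reesJ {R : Type u} [CommRing R] {ι : Type v} (f : ι → R) :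
    Ideal (MvPolynomial ι R) :=
  RingHom.ker (reesHom f)

/-- `L`, the ideal of `T` generated by the linear relations `∑ aᵢ yᵢ` with `∑ aᵢ fᵢ = 0`. -/
def linRel {R : Type u} [CommRing R] {ι : Type v} (f : ι → R) :
    Ideal (MvPolynomial ι R) :=
  Ideal.span {p | ∃ a : ι →₀ R, (a.sum fun i r => r * f i) = 0 ∧
    p = a.sum fun i r => MvPolynomial.C r * MvPolynomial.X i}

/-- The conductor `C(I) = L :_R J = {r ∈ R : r J ⊆ L}`. -/
def conductorIdeal {R : Type u} [CommRing R] {ι : Type v} (f : ι → R) : Ideal R :=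
  Submodule.colon (Submodule.restrictScalars R (linRel f))
    (Submodule.restrictScalars R (reesJ f))

/-- The ideal generated by `f` is of linear type if `J = L`. -/
def IsLinearType {R : Type u} [CommRing R] {ι : Type v} (f : ι → R) : Prop :=
  reesJ f = linRel f

end

noncomputable section Aux

open MvPolynomial

variable {R : Type} [CommRing R] {m : ℕ} (f : Fin m → R)

/-- membership of a linear relation in `L`. -/
lemma lin_mem (a : Fin m →₀ R) (h : (a.sum fun i r => r * f i) = 0) :
    (a.sum fun i r => MvPolynomial.C r * MvPolynomial.X i) ∈ linRel f :=
  Ideal.subset_span ⟨a, h, rfl⟩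

/-- The Koszul-type relations belong to `L`. -/
lemma rel_mem (i j : Fin m) :
    (C (f i) * X j - C (f j) * X i : MvPolynomial (Fin m) R) ∈ linRel f := by
  have h := lin_mem f (Finsupp.single j (f i) + Finsupp.single i (-(f j))) ?_
  · have e1 : ((Finsupp.single j (f i) + Finsupp.single i (-(f j))).sum
        fun k r => MvPolynomial.C r * MvPolynomial.X k)
        = C (f i) * X j - C (f j) * X i := by
      rw [Finsupp.sum_add_index' (by intro k; simp) (by intro k r s; rw [map_add, add_mul])]
      rw [Finsupp.sum_single_index (by simp), Finsupp.sum_single_index (by simp)]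
      simp [sub_eq_add_neg]
    rwa [e1] at h
  · rw [Finsupp.sum_add_index' (by intro k; simp) (by intro k r s; rw [add_mul])]
    rw [Finsupp.sum_single_index (by simp), Finsupp.sum_single_index (by simp)]
    ring

/-- `L ⊆ J`. -/
lemma linRel_le_reesJ : linRel f ≤ reesJ f := by
  rw [linRel, Ideal.span_le]
  rintro p ⟨a, ha, rfl⟩
  simp only [SetLike.mem_coe, reesJ, RingHom.mem_ker]
  rw [map_finsuppSum]
  have h1 : ∀ (i : Fin m) (r : R),
      reesHom f (MvPolynomial.C r * MvPolynomial.X i)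
        = Polynomial.C (r * f i) * Polynomial.X := by
    intro i r
    simp only [reesHom, map_mul, aeval_C, aeval_X]
    rw [show (algebraMap R (Polynomial R)) r = Polynomial.C r from rfl]
    ring
  rw [show (a.sum fun k b => reesHom f (MvPolynomial.C b * MvPolynomial.X k))
      = a.sum fun k b => Polynomial.C (b * f k) * Polynomial.X from
    Finsupp.sum_congr fun k _ => h1 k (a k)]
  rw [← Finsupp.sum_mul, ← map_finsuppSum (Polynomial.C : R →+* Polynomial R), ha]
  simp

/-- coefficient formula for `reesHom`. -/
lemma coeff_reesHom (p : MvPolynomial (Fin m) R) (n : ℕ) :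
    (reesHom f p).coeff n = MvPolynomial.eval f (homogeneousComponent n p) := by
  induction p using MvPolynomial.induction_on' with
  | monomial v c =>
    have hmem : (monomial v) c ∈ homogeneousSubmodule (Fin m) R v.degree :=
      (mem_homogeneousSubmodule _ _).mpr (isHomogeneous_monomial c rfl)
    rw [homogeneousComponent_of_mem hmem]
    have : reesHom f ((monomial v) c)
        = Polynomial.C (c * v.prod fun j e => f j ^ e) * Polynomial.X ^ v.degree := by
      rw [reesHom, aeval_monomial]
      have : (v.prod fun j e => (Polynomial.C (f j) * Polynomial.X) ^ e)
          = Polynomial.C (v.prod fun j e => f j ^ e) * Polynomial.X ^ v.degree := by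
        simp_rw [mul_pow]
        rw [Finsupp.prod_mul]
        congr 1
        · rw [map_finsuppProd]
          simp
        · rw [Finsupp.prod, Finset.prod_pow_eq_pow_sum, Finsupp.degree_apply]
      rw [this, ← mul_assoc]
      simp [Polynomial.C_mul, algebraMap_eq]
    rw [this, Polynomial.coeff_C_mul, Polynomial.coeff_X_pow]
    split_ifs with h1
    · simp [eval_monomial, Finsupp.prod]
    · simp
  | add p q hp hq =>
    rw [map_add, Polynomial.coeff_add, hp, hq, map_add, map_add]

/-- `J` is a graded ideal. -/
lemma reesJ_graded {p : MvPolynomial (Fin m) R} (hp : p ∈ reesJ f) (n : ℕ) :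
    homogeneousComponent n p ∈ reesJ f := by
  have hp0 : reesHom f p = 0 := hp
  rw [reesJ, RingHom.mem_ker]
  apply Polynomial.ext
  intro d
  rw [coeff_reesHom, homogeneousComponent_of_mem (homogeneousComponent_mem n p)]
  split_ifs with h
  · subst h
    rw [← coeff_reesHom, hp0, Polynomial.coeff_zero]
  · simp

/-- The scaling map is multiplication by `a ^ d` on homogeneous polynomials of degree `d`. -/
lemma sigma_homog (a : R) {p : MvPolynomial (Fin m) R} {d : ℕ} (hp : p.IsHomogeneous d) :
    MvPolynomial.aeval (fun j : Fin m => (C a * X j : MvPolynomial (Fin m) R)) p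
      = C (a ^ d) * p := by
  conv_lhs => rw [p.as_sum]
  rw [map_sum]
  conv_rhs => rw [p.as_sum, Finset.mul_sum]
  apply Finset.sum_congr rfl
  intro v hv
  have hdeg : v.degree = d := by
    rw [Finsupp.degree_eq_weight_one]
    exact hp (mem_support_iff.mp hv)
  rw [aeval_monomial]
  have : (v.prod fun j e => (C a * X j : MvPolynomial (Fin m) R) ^ e)
      = C (a ^ d) * v.prod fun j e => (X j : MvPolynomial (Fin m) R) ^ e := by
    simp_rw [mul_pow]
    rw [Finsupp.prod_mul]
    congr 1
    rw [Finsupp.prod, Finset.prod_pow_eq_pow_sum, ← map_pow]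
    rw [← hdeg, Finsupp.degree_apply]
  rw [this, monomial_eq]
  rw [algebraMap_eq]
  ring

end Aux

/-- For a domain `R` and a non-zero ideal `I = (f₁,…,f_m)`:
(a) `C(I) ≠ 0`; (b) for every non-zero `r ∈ C(I)` one has `L :_T r = J`. -/
theorem stmt_1 {R : Type} [CommRing R] [IsDomain R] [IsNoetherianRing R] {m : ℕ}
    (f : Fin m → R) (I : Ideal R) (hI : I = Ideal.span (Set.range f)) (hne : I ≠ ⊥) :
    conductorIdeal f ≠ ⊥ ∧
      ∀ r ∈ conductorIdeal f, r ≠ 0 →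
        Submodule.colon (linRel f)
            (Ideal.span {(MvPolynomial.C r : MvPolynomial (Fin m) R)}) = reesJ f := by
  classical
  open MvPolynomial in
  -- there is an index with `f i ≠ 0`
  have hex : ∃ i, f i ≠ 0 := by
    by_contra h
    push_neg at h
    apply hne
    rw [hI, Ideal.span_eq_bot]
    rintro x ⟨i, rfl⟩
    exact h i
  obtain ⟨i, hfi⟩ := hex
  set a := f i with ha
  -- the two algebra maps
  set σa : MvPolynomial (Fin m) R →ₐ[R] MvPolynomial (Fin m) R :=
    MvPolynomial.aeval (fun j : Fin m => MvPolynomial.C a * MvPolynomial.X j) with hσa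
  set ψ : MvPolynomial (Fin m) R →ₐ[R] MvPolynomial (Fin m) R :=
    (Polynomial.aeval (MvPolynomial.X i : MvPolynomial (Fin m) R)).comp (reesHom f) with hψ
  have hσψ : ∀ p : MvPolynomial (Fin m) R, σa p - ψ p ∈ linRel f := by
    have key : (Ideal.Quotient.mkₐ R (linRel f)).comp σa
        = (Ideal.Quotient.mkₐ R (linRel f)).comp ψ := by
      apply MvPolynomial.algHom_ext
      intro j
      have h0 : σa (MvPolynomial.X j) = MvPolynomial.C a * MvPolynomial.X j := by
        rw [hσa]; exact MvPolynomial.aeval_X _ j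
      have h1 : ψ (MvPolynomial.X j) = MvPolynomial.C (f j) * MvPolynomial.X i := by
        rw [hψ]
        simp only [AlgHom.comp_apply, reesHom, MvPolynomial.aeval_X, map_mul,
          Polynomial.aeval_C, Polynomial.aeval_X, MvPolynomial.algebraMap_eq]
      simp only [AlgHom.comp_apply, h0, h1, Ideal.Quotient.mkₐ_eq_mk]
      rw [Ideal.Quotient.eq]
      exact rel_mem f i j
    intro p
    have := congrArg (fun g : MvPolynomial (Fin m) R →ₐ[R] _ => g p) key
    simp only [AlgHom.comp_apply, Ideal.Quotient.mkₐ_eq_mk] at this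
    exact (Ideal.Quotient.eq).mp this
  have hψ0 : ∀ p ∈ reesJ f, ψ p = 0 := by
    intro p hp
    have : reesHom f p = 0 := hp
    simp [hψ, this]
  -- the key lemma
  have hkey : ∀ p ∈ reesJ f, ∀ D : ℕ, p.totalDegree ≤ D →
      MvPolynomial.C (a ^ D) * p ∈ linRel f := by
    intro p hp D hD
    rw [← MvPolynomial.sum_homogeneousComponent p, Finset.mul_sum]
    apply Ideal.sum_mem
    intro d hd
    have hdD : d ≤ D := by
      have := Finset.mem_range.mp hd
      omega
    have h1 : MvPolynomial.C (a ^ d) * MvPolynomial.homogeneousComponent d p ∈ linRel f := by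
      have h2 := hσψ (MvPolynomial.homogeneousComponent d p)
      rw [hψ0 _ (reesJ_graded f hp d), sub_zero] at h2
      rwa [hσa, sigma_homog a (MvPolynomial.homogeneousComponent_isHomogeneous d p)] at h2
    have : (a : R) ^ D = a ^ (D - d) * a ^ d := (pow_sub_mul_pow a hdD).symm
    rw [this, map_mul, mul_assoc]
    exact Ideal.mul_mem_left _ _ h1
  -- find generators and a uniform degree bound
  have hfg : (reesJ f).FG := IsNoetherian.noetherian (reesJ f)
  obtain ⟨s, hs⟩ := hfg
  set D := s.sup MvPolynomial.totalDegree with hDdef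
  have haD : a ^ D ∈ conductorIdeal f := by
    rw [conductorIdeal, Submodule.mem_colon]
    intro p hp
    rw [SetLike.mem_coe, Submodule.restrictScalars_mem] at hp
    rw [Submodule.restrictScalars_mem, MvPolynomial.smul_eq_C_mul]
    rw [← hs] at hp
    induction hp using Submodule.span_induction with
    | mem g hg =>
      exact hkey g (hs ▸ Ideal.subset_span hg) D (Finset.le_sup hg)
    | zero => simp
    | add x y hx hy ihx ihy => rw [mul_add]; exact Ideal.add_mem _ ihx ihy
    | smul t x hx ih =>
      rw [smul_eq_mul, mul_left_comm]
      exact Ideal.mul_mem_left _ _ ih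
  constructor
  · intro hbot
    rw [hbot, Ideal.mem_bot] at haD
    exact pow_ne_zero D hfi haD
  · intro r hr hr0
    apply le_antisymm
    · -- L : (r) ⊆ J
      intro p hp
      have h1 : p • (MvPolynomial.C r : MvPolynomial (Fin m) R) ∈ linRel f :=
        Submodule.mem_colon.mp hp _ (Ideal.subset_span rfl)
      have h2 : p * MvPolynomial.C r ∈ reesJ f := linRel_le_reesJ f h1
      have h3 : reesHom f p * Polynomial.C r = 0 := by
        have : reesHom f (p * MvPolynomial.C r) = 0 := h2
        rwa [map_mul, show reesHom f (MvPolynomial.C r) = Polynomial.C r by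
          simp [reesHom, MvPolynomial.algebraMap_eq]] at this
      have h4 : reesHom f p = 0 := by
        rcases mul_eq_zero.mp h3 with h | h
        · exact h
        · exact absurd (Polynomial.C_eq_zero.mp h) hr0
      exact h4
    · -- J ⊆ L : (r)
      intro p hp
      rw [Submodule.mem_colon]
      intro q hq
      rw [SetLike.mem_coe, Ideal.mem_span_singleton] at hq
      obtain ⟨t, rfl⟩ := hq
      have h1 : (r : R) • p ∈ linRel f := by
        have := Submodule.mem_colon.mp hr p (by rwa [SetLike.mem_coe, Submodule.restrictScalars_mem])
        rwa [Submodule.restrictScalars_mem] at this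
      rw [MvPolynomial.smul_eq_C_mul] at h1
      have he : p * (MvPolynomial.C r * t) = t * (MvPolynomial.C r * p) := by ring
      rw [smul_eq_mul, he]
      exact Ideal.mul_mem_left _ _ h1
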